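/- Suppose that for every state (z,x,y) the value-iteration sequence converges pointwise, i.e. V_i(z,x,y) → V*(z,x,y) as i → ∞ for some function V*. Then the limiting (optimal long-term expected reward) function is monotonically non-decreasing with respect to the battery level: for every solar state z, channel state x, and battery level y with 1 ≤ y ≤ N_B−1, V*(z,x,y−1) ≤ V*(z,x,y). -/

import Mathlib

/-!
On-off energy-harvesting MDP value iteration.
`Va` is the one-step action-value operator, `Viter i` is the `i`-th value-iteration
function `V_i`, and `VIa i a` is the action-value function `V_i^a`.
-/

/-- The one-step action-value operator:
`Va NB aH pC pQ r lam V a z x y = a·r(x) + λ·Σ_j Σ_l Σ'_q aH(z,j)·pC(x,l)·pQ(z,q)·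
V(j, l, min{N_B−1, y−a+q})`. -/
noncomputable def Va {NH NC : ℕ} (NB : ℕ) (aH : Fin NH → Fin NH → ℝ)
    (pC : Fin NC → Fin NC → ℝ) (pQ : Fin NH → ℕ → ℝ) (r : Fin NC → ℝ) (lam : ℝ)
    (V : Fin NH → Fin NC → ℕ → ℝ) (a : ℕ) (z : Fin NH) (x : Fin NC) (y : ℕ) : ℝ :=
  a * r x + lam * ∑ j : Fin NH, ∑ l : Fin NC,
    ∑' q : ℕ, aH z j * pC x l * pQ z q * V j l (min (NB - 1) (y - a + q))

/-- Value iteration: `V_0 = 0` and `V_{i+1}(z,x,y) = max_{0 ≤ a ≤ min{y,1}} V_{i+1}^a(z,x,y)`. -/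
noncomputable def Viter {NH NC : ℕ} (NB : ℕ) (aH : Fin NH → Fin NH → ℝ)
    (pC : Fin NC → Fin NC → ℝ) (pQ : Fin NH → ℕ → ℝ) (r : Fin NC → ℝ) (lam : ℝ) :
    ℕ → Fin NH → Fin NC → ℕ → ℝ
  | 0 => fun _ _ _ => 0
  | (i + 1) => fun z x y =>
      (Finset.range (min y 1 + 1)).sup' Finset.nonempty_range_add_one
        (fun a => Va NB aH pC pQ r lam (Viter NB aH pC pQ r lam i) a z x y)

/-- Action-value iteration: `V_0^a = 0` and `V_{i+1}^a` is `Va` applied to `V_i`. -/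
noncomputable def VIa {NH NC : ℕ} (NB : ℕ) (aH : Fin NH → Fin NH → ℝ)
    (pC : Fin NC → Fin NC → ℝ) (pQ : Fin NH → ℕ → ℝ) (r : Fin NC → ℝ) (lam : ℝ) :
    ℕ → ℕ → Fin NH → Fin NC → ℕ → ℝ
  | 0 => fun _ _ _ _ => 0
  | (i + 1) => fun a z x y => Va NB aH pC pQ r lam (Viter NB aH pC pQ r lam i) a z x y


section Aux

variable {NH NC : ℕ} (NB : ℕ) (aH : Fin NH → Fin NH → ℝ)
    (pC : Fin NC → Fin NC → ℝ) (pQ : Fin NH → ℕ → ℝ) (r : Fin NC → ℝ) (lam : ℝ)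

lemma va_summable (hNB : 2 ≤ NB)
    (haH : ∀ z j, 0 ≤ aH z j) (hpC : ∀ x l, 0 ≤ pC x l)
    (hpQ : ∀ z q, 0 ≤ pQ z q) (hpQsummable : ∀ z, Summable (pQ z))
    (V : Fin NH → Fin NC → ℕ → ℝ) (hV : ∀ j l y, 0 ≤ V j l y)
    (z j : Fin NH) (x l : Fin NC) (k : ℕ → ℕ) (hk : ∀ q, k q < NB) :
    Summable (fun q => aH z j * pC x l * pQ z q * V j l (k q)) := by
  have hne : (Finset.range NB).Nonempty := Finset.nonempty_range_iff.mpr (by omega)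
  set M : ℝ := (Finset.range NB).sup' hne (V j l) with hM
  refine Summable.of_nonneg_of_le (fun q => ?_) (fun q => ?_)
    (((hpQsummable z).mul_left (aH z j * pC x l)).mul_right M)
  · exact mul_nonneg (mul_nonneg (mul_nonneg (haH z j) (hpC x l)) (hpQ z q)) (hV j l (k q))
  · have hVM : V j l (k q) ≤ M :=
      Finset.le_sup' (V j l) (Finset.mem_range.mpr (hk q))
    exact mul_le_mul_of_nonneg_left hVM
      (mul_nonneg (mul_nonneg (haH z j) (hpC x l)) (hpQ z q))

lemma viter_nonneg
    (haH : ∀ z j, 0 ≤ aH z j) (hpC : ∀ x l, 0 ≤ pC x l)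
    (hpQ : ∀ z q, 0 ≤ pQ z q)
    (hr : ∀ x, 0 ≤ r x) (hlam0 : 0 ≤ lam) :
    ∀ i z x y, 0 ≤ Viter NB aH pC pQ r lam i z x y := by
  intro i
  induction i with
  | zero => intro z x y; simp [Viter]
  | succ i ih =>
    intro z x y
    have h0 : (0 : ℕ) ∈ Finset.range (min y 1 + 1) := Finset.mem_range.mpr (Nat.succ_pos _)
    have := Finset.le_sup' (fun a => Va NB aH pC pQ r lam (Viter NB aH pC pQ r lam i) a z x y) h0
    refine le_trans ?_ this
    simp only [Va, Nat.cast_zero, zero_mul, zero_add]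
    refine mul_nonneg hlam0 (Finset.sum_nonneg fun j _ => Finset.sum_nonneg fun l _ => ?_)
    exact tsum_nonneg fun q => mul_nonneg
      (mul_nonneg (mul_nonneg (haH z j) (hpC x l)) (hpQ z q)) (ih j l _)

lemma viter_mono (hNB : 2 ≤ NB)
    (haH : ∀ z j, 0 ≤ aH z j) (hpC : ∀ x l, 0 ≤ pC x l)
    (hpQ : ∀ z q, 0 ≤ pQ z q) (hpQsummable : ∀ z, Summable (pQ z))
    (hr : ∀ x, 0 ≤ r x) (hlam0 : 0 ≤ lam) :
    ∀ i z x y y', y ≤ y' →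
      Viter NB aH pC pQ r lam i z x y ≤ Viter NB aH pC pQ r lam i z x y' := by
  intro i
  induction i with
  | zero => intro z x y y' _; simp [Viter]
  | succ i ih =>
    intro z x y y' hyy
    have hVnn := viter_nonneg NB aH pC pQ r lam haH hpC hpQ hr hlam0 i
    show (Finset.range (min y 1 + 1)).sup' Finset.nonempty_range_add_one _ ≤ _
    refine Finset.sup'_le _ _ fun a ha => ?_
    have ha' : a ∈ Finset.range (min y' 1 + 1) := by
      simp only [Finset.mem_range] at ha ⊢; omega
    refine le_trans ?_
      (Finset.le_sup' (fun a => Va NB aH pC pQ r lam (Viter NB aH pC pQ r lam i) a z x y') ha')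
    simp only [Va]
    refine add_le_add_right (mul_le_mul_of_nonneg_left
      (Finset.sum_le_sum fun j _ => Finset.sum_le_sum fun l _ => ?_) hlam0) _
    refine Summable.tsum_le_tsum (fun q => ?_) ?_ ?_
    · refine mul_le_mul_of_nonneg_left ?_
        (mul_nonneg (mul_nonneg (haH z j) (hpC x l)) (hpQ z q))
      exact ih j l _ _ (by omega)
    · exact va_summable NB aH pC pQ hNB haH hpC hpQ hpQsummable _ hVnn
        z j x l _ (fun q => by omega)
    · exact va_summable NB aH pC pQ hNB haH hpC hpQ hpQsummable _ hVnn
        z j x l _ (fun q => by omega)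

end Aux

/-- Theorem 1: if the value-iteration sequence converges pointwise to
`Vstar`, then the limiting optimal long-term expected reward is monotonically
non-decreasing with respect to the battery level. -/
theorem vstar_monotone_in_battery {NH NC : ℕ} (NB : ℕ)
    (hNH : 1 ≤ NH) (hNC : 1 ≤ NC) (hNB : 2 ≤ NB)
    (aH : Fin NH → Fin NH → ℝ) (pC : Fin NC → Fin NC → ℝ)
    (pQ : Fin NH → ℕ → ℝ) (r : Fin NC → ℝ) (lam : ℝ)
    (haH : ∀ z j, 0 ≤ aH z j) (haHsum : ∀ z, ∑ j, aH z j = 1)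
    (hpC : ∀ x l, 0 ≤ pC x l) (hpCsum : ∀ x, ∑ l, pC x l = 1)
    (hpQ : ∀ z q, 0 ≤ pQ z q) (hpQsummable : ∀ z, Summable (pQ z))
    (hpQsum : ∀ z, (∑' q, pQ z q) = 1)
    (hr : ∀ x, 0 ≤ r x) (hlam0 : 0 ≤ lam) (hlam1 : lam ≤ 1)
    (Vstar : Fin NH → Fin NC → ℕ → ℝ)
    (hconv : ∀ (z : Fin NH) (x : Fin NC) (y : ℕ), y ≤ NB - 1 →
      Filter.Tendsto (fun i => Viter NB aH pC pQ r lam i z x y)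
        Filter.atTop (nhds (Vstar z x y))) :
    ∀ (z : Fin NH) (x : Fin NC) (y : ℕ), 1 ≤ y → y ≤ NB - 1 →
      Vstar z x (y - 1) ≤ Vstar z x y := by
  intro z x y hy1 hy2
  refine le_of_tendsto_of_tendsto' (hconv z x (y - 1) (by omega)) (hconv z x y hy2)
    (fun i => viter_mono NB aH pC pQ r lam hNB haH hpC hpQ hpQsummable hr hlam0
      i z x (y - 1) y (Nat.sub_le _ _))
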